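/- Let G' be a 2-terminal directed graph and let G be obtained from G' by adding an edge (a,b) such that G' has no directed path from b to a. Then G is a 2-terminal directed graph: every edge and vertex of G lies on a simple directed s-t path. -/

import Mathlib

variable {V : Type*}

/-- `p` is a simple directed path in the edge relation `E`. -/
def IsDiPath (E : V → V → Prop) (p : List V) : Prop := p.Chain' E ∧ p.Nodup

/-- `p` is a simple directed path from `x` to `y`. -/
def PathFrom (E : V → V → Prop) (p : List V) (x y : V) : Prop :=
  IsDiPath E p ∧ p.head? = some x ∧ p.getLast? = some y

/-- the edge `(a,b)` is traversed by the path `p`. -/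
def EdgeOn (a b : V) (p : List V) : Prop := (a, b) ∈ p.zip p.tail

/-- directed reachability. -/
def Reach (E : V → V → Prop) : V → V → Prop := Relation.ReflTransGen E

/-- no directed cycles. -/
def Acyclic (E : V → V → Prop) : Prop := ∀ a b, E a b → ¬ Reach E b a

/-- 2-terminal graph (edge version): no self-loops, some `s`-`t` path exists and
every edge lies on a simple `s`-`t` path. -/
def TwoTerminalE (E : V → V → Prop) (s t : V) : Prop :=
  (∀ v, ¬ E v v) ∧ (∃ p, PathFrom E p s t) ∧
  ∀ a b, E a b → ∃ p, PathFrom E p s t ∧ EdgeOn a b p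

/-- 2-terminal graph (full version): no self-loops and every vertex and edge
lies on a simple `s`-`t` path. -/
def TwoTerminalF (E : V → V → Prop) (s t : V) : Prop :=
  (∀ v, ¬ E v v) ∧ (∀ v, ∃ p, PathFrom E p s t ∧ v ∈ p) ∧
  ∀ a b, E a b → ∃ p, PathFrom E p s t ∧ EdgeOn a b p

/-- `C` is an `s`-`t` edge cut. -/
def IsCut (E : V → V → Prop) (s t : V) (C : Set (V × V)) : Prop :=
  (∀ e ∈ C, E e.1 e.2) ∧ ¬ ∃ p, PathFrom (fun a b => E a b ∧ (a, b) ∉ C) p s t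

def IsMinCut (E : V → V → Prop) (s t : V) (C : Set (V × V)) : Prop :=
  IsCut E s t C ∧ ∀ C' ⊂ C, ¬ IsCut E s t C'

/-- `S` is parallel: contained in some minimal `s`-`t` cut. -/
def Parallel (E : V → V → Prop) (s t : V) (S : Set (V × V)) : Prop :=
  ∃ C, IsMinCut E s t C ∧ S ⊆ C

/-- `S` is serial: contained in a simple directed `s`-`t` path. -/
def Serial (E : V → V → Prop) (s t : V) (S : Set (V × V)) : Prop :=
  ∃ p, PathFrom E p s t ∧ ∀ e ∈ S, EdgeOn e.1 e.2 p

section Aux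
variable {V : Type*} {E : V → V → Prop}

lemma reach_head : ∀ {l : List V}, l.Chain' E → ∀ {x v : V},
    l.head? = some x → v ∈ l → Reach E x v := by
  intro l
  induction l with
  | nil => intro _ x v h; simp at h
  | cons c l ih =>
    intro hc x v hx hv
    simp at hx; subst hx
    rcases List.mem_cons.mp hv with h | h
    · subst h; exact Relation.ReflTransGen.refl
    · cases l with
      | nil => simp at h
      | cons d l' =>
        have hcd : E c d := (List.isChain_cons_cons.mp hc).1
        have := ih (List.isChain_cons_cons.mp hc).2 (x := d) rfl h
        exact Relation.ReflTransGen.head hcd this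

lemma reach_last : ∀ {l : List V}, l.Chain' E → ∀ {v w : V},
    v ∈ l → l.getLast? = some w → Reach E v w := by
  intro l
  induction l with
  | nil => intro _ v w h; simp at h
  | cons c l ih =>
    intro hc v w hv hw
    cases l with
    | nil =>
      simp at hv hw; subst hv; subst hw; exact Relation.ReflTransGen.refl
    | cons d l' =>
      rw [List.getLast?_cons_cons] at hw
      have hcd : E c d := (List.isChain_cons_cons.mp hc).1
      have htl := (List.isChain_cons_cons.mp hc).2
      rcases List.mem_cons.mp hv with h | h
      · subst h
        exact Relation.ReflTransGen.head hcd (ih htl List.mem_cons_self hw)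
      · exact ih htl h hw

lemma edgeOn_mid (a b : V) (y : List V) : ∀ u : List V, EdgeOn a b (u ++ a :: b :: y) := by
  intro u
  induction u with
  | nil => simp [EdgeOn]
  | cons c u' ih =>
    unfold EdgeOn at ih ⊢
    cases h : u' ++ a :: b :: y with
    | nil => simp at h
    | cons d m =>
      simp only [List.cons_append, h, List.tail_cons, List.zip_cons_cons]
      rw [h] at ih
      exact List.mem_cons_of_mem _ ih

lemma head?_append_cons (u : List V) (c : V) (l l' : List V) :
    (u ++ c :: l).head? = (u ++ c :: l').head? := by
  cases u <;> simp

end Aux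

/-- Adding an edge `(a,b)` to a 2-terminal directed graph, when there is no directed
path from `b` to `a`, yields a 2-terminal directed graph. -/

theorem stmt5 {V : Type*} (E : V → V → Prop) (s t a b : V)
    (hG : TwoTerminalF E s t) (hba : ¬ Reach E b a) :
    TwoTerminalF (fun u v => E u v ∨ (u = a ∧ v = b)) s t := by
  obtain ⟨hloop, hvert, hedge⟩ := hG
  have hab : a ≠ b := by
    rintro rfl; exact hba Relation.ReflTransGen.refl
  have mono : ∀ {p x y}, PathFrom E p x y →
      PathFrom (fun u v => E u v ∨ (u = a ∧ v = b)) p x y := by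
    rintro p x y ⟨⟨hc, hn⟩, h1, h2⟩
    exact ⟨⟨hc.imp (fun _ _ h => Or.inl h), hn⟩, h1, h2⟩
  refine ⟨?_, ?_, ?_⟩
  · rintro v (h | ⟨rfl, rfl⟩)
    · exact hloop v h
    · exact hab rfl
  · intro v
    obtain ⟨p, hp, hv⟩ := hvert v
    exact ⟨p, mono hp, hv⟩
  · rintro a' b' (h | ⟨rfl, rfl⟩)
    · obtain ⟨p, hp, he⟩ := hedge a' b' h
      exact ⟨p, mono hp, he⟩
    · -- new edge case
      obtain ⟨p1, ⟨⟨hc1, hn1⟩, hh1, hl1⟩, ha1⟩ := hvert a'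
      obtain ⟨p2, ⟨⟨hc2, hn2⟩, hh2, hl2⟩, hb2⟩ := hvert b'
      obtain ⟨u, w, hp1⟩ := List.append_of_mem ha1
      obtain ⟨x, y, hp2⟩ := List.append_of_mem hb2
      subst hp1; subst hp2
      -- the prefix u ++ [a'] and suffix b' :: y
      have hpre : (u ++ [a']).Chain' E := by
        rw [List.append_cons] at hc1
        exact (List.isChain_append.mp hc1).1
      have hsuf : (b' :: y).Chain' E := (List.isChain_append.mp hc2).2.1
      have hdisj : (u ++ [a']).Disjoint (b' :: y) := by
        intro v hv1 hv2
        apply hba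
        have r1 : Reach E v a' := reach_last hpre hv1 (by simp)
        have r2 : Reach E b' v := reach_head hsuf rfl hv2
        exact r2.trans r1
      have hnpre : (u ++ [a']).Nodup := by
        rw [List.append_cons] at hn1
        exact (List.nodup_append.mp hn1).1
      have hnsuf : (b' :: y).Nodup := (List.nodup_append.mp hn2).2.1
      refine ⟨(u ++ [a']) ++ (b' :: y), ⟨⟨?_, ?_⟩, ?_, ?_⟩, ?_⟩
      · show List.IsChain _ (u ++ [a'] ++ b' :: y)
        rw [List.isChain_append]
        refine ⟨hpre.imp (fun _ _ h => Or.inl h),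
          hsuf.imp (fun _ _ h => Or.inl h), ?_⟩
        simp
      · exact List.nodup_append'.mpr ⟨hnpre, hnsuf, hdisj⟩
      · rw [show (u ++ [a']) ++ (b' :: y) = u ++ a' :: (b' :: y) by simp,
          head?_append_cons u a' (b' :: y) w]
        exact hh1
      · rw [List.getLast?_append]
        rw [List.getLast?_append] at hl2
        exact hl2
      · rw [show (u ++ [a']) ++ (b' :: y) = u ++ a' :: b' :: y by simp]
        exact edgeOn_mid a' b' y u
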